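/- For real β and x ≠ 0, define h_β(x) = (1/4)·((1+βx)^n + (1-βx)^n)·((1+β/x)^n - (1-β/x)^n) where n = 2k+1 is odd. Then the derivative of h_β with respect to x evaluated at x = 1 satisfies h_β'(1) = -n·β·(1-β^2)^{n-1}. -/

import Mathlib

/-- The derivative at `x = 1` of
`h_β(x) = (1/4)((1+βx)^n + (1-βx)^n)((1+β/x)^n - (1-β/x)^n)`, with `n = 2k+1` odd,
equals `-n β (1-β²)^(n-1)`. -/
theorem stmt1 (k : ℕ) (hk : 1 ≤ k) (β : ℝ) :
    HasDerivAt
      (fun x : ℝ =>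
        (1 / 4) * ((1 + β * x) ^ (2 * k + 1) + (1 - β * x) ^ (2 * k + 1)) *
          ((1 + β / x) ^ (2 * k + 1) - (1 - β / x) ^ (2 * k + 1)))
      (-((2 * (k : ℝ) + 1) * β * (1 - β ^ 2) ^ (2 * k))) 1 := by
  have hu : HasDerivAt (fun x : ℝ => 1 + β * x) β 1 := by
    simpa using ((hasDerivAt_id 1).const_mul β).const_add 1
  have hv : HasDerivAt (fun x : ℝ => 1 - β * x) (-β) 1 := by
    simpa using ((hasDerivAt_id 1).const_mul β).const_sub 1
  have hq : HasDerivAt (fun x : ℝ => β / x) (-β) 1 := by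
    simpa using (hasDerivAt_const (1:ℝ) β).fun_div (hasDerivAt_id 1) one_ne_zero
  have hu' : HasDerivAt (fun x : ℝ => 1 + β / x) (-β) 1 := by
    simpa using hq.const_add 1
  have hv' : HasDerivAt (fun x : ℝ => 1 - β / x) β 1 := by
    simpa using hq.const_sub 1
  have hA : HasDerivAt
      (fun x : ℝ => (1 + β * x) ^ (2 * k + 1) + (1 - β * x) ^ (2 * k + 1))
      ((2 * k + 1) * (1 + β * 1) ^ (2 * k) * β +
        (2 * k + 1) * (1 - β * 1) ^ (2 * k) * (-β)) 1 := by
    simpa using (hu.fun_pow (2 * k + 1)).fun_add (hv.fun_pow (2 * k + 1))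
  have hB : HasDerivAt
      (fun x : ℝ => (1 + β / x) ^ (2 * k + 1) - (1 - β / x) ^ (2 * k + 1))
      ((2 * k + 1) * (1 + β / 1) ^ (2 * k) * (-β) -
        (2 * k + 1) * (1 - β / 1) ^ (2 * k) * β) 1 := by
    simpa using (hu'.fun_pow (2 * k + 1)).fun_sub (hv'.fun_pow (2 * k + 1))
  have h := ((hA.const_mul (1 / 4 : ℝ)).fun_mul hB)
  refine h.congr_deriv ?_
  have h1 : (1 - β ^ 2 : ℝ) = (1 + β) * (1 - β) := by ring
  simp only [mul_one, div_one, h1, mul_pow]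
  ring
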